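/- Let T_i be a rooted binary phylogenetic tree on leaf set Y_i with root y_i, evolving under the symmetric 4-state model N_4, and suppose y_i is attached below a node ρ by an edge on which one specific state change occurs with probability p_i ∈ [0,1/4]. Writing P_(A)(Y_i) = P(MP(f_{Y_i}, T_i) = A | ρ = α) for the probability, conditional on ρ being in state α, that the Fitch algorithm assigns the set A at y_i, one has 4·P_(α)(Y_i) + 6·P_(αβ)(Y_i) + 4·P_(αβγ)(Y_i) + P_(αβγδ)(Y_i) = 4·(p_i + (1 − 4p_i)·RA(Y_i)), where RA(Y_i) is the reconstruction accuracy of the Fitch algorithm on T_i. -/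

import Mathlib

/-- A rooted binary phylogenetic tree: a `leaf` is a single taxon, and the
root of `node p₁ p₂ L R` has the roots of `L` and `R` as its two children,
attached by edges carrying one-specific-change probabilities `p₁` and `p₂`. -/
inductive PhyloTree : Type
  | leaf : PhyloTree
  | node (p₁ p₂ : ℝ) (L R : PhyloTree) : PhyloTree

namespace PhyloTree

/-- The number of leaves (taxa) of the tree. -/
def nLeaves : PhyloTree → ℕ
  | leaf => 1
  | node _ _ L R => nLeaves L + nLeaves R

/-- All edge substitution probabilities of the tree lie in `[0, 1/4]`. -/
def valid : PhyloTree → Prop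
  | leaf => True
  | node p₁ p₂ L R => 0 ≤ p₁ ∧ p₁ ≤ 1/4 ∧ 0 ≤ p₂ ∧ p₂ ≤ 1/4 ∧ valid L ∧ valid R

end PhyloTree

/-- Transition probabilities of the symmetric 4-state model `N₄`: conditional
on the upper endpoint of an edge with substitution probability `q` being in
state `a`, the lower endpoint is in each specific state `b ≠ a` with
probability `q`, and in state `a` with probability `1 - 3q`. -/
noncomputable def trans4 (q : ℝ) (a b : Fin 4) : ℝ := if a = b then 1 - 3*q else q

/-- `charProb4 t a f` is the probability, conditional on the root of `t`
being in state `a`, that the leaves of `t` (read from left to right) are in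
the states recorded by the list `f`.  States evolve independently along the
edges according to `trans4`. -/
noncomputable def charProb4 : PhyloTree → Fin 4 → List (Fin 4) → ℝ
  | .leaf, a, f => if f = [a] then 1 else 0
  | .node p₁ p₂ L R, a, f =>
      ∑ b : Fin 4, ∑ c : Fin 4, trans4 p₁ a b * trans4 p₂ a c *
        charProb4 L b (f.take L.nLeaves) * charProb4 R c (f.drop L.nLeaves)

/-- Fitch's parsimony operation: `A ∩ B` if it is nonempty, `A ∪ B` otherwise. -/
def fitchOp {k : ℕ} (A B : Finset (Fin k)) : Finset (Fin k) :=
  if (A ∩ B).Nonempty then A ∩ B else A ∪ B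

/-- The set `MP(f,T)` assigned to the root of `t` by the Fitch algorithm when
the leaves carry the character (list of leaf states) `f`. -/
def fitchSet4 : PhyloTree → List (Fin 4) → Finset (Fin 4)
  | .leaf, [b] => {b}
  | .leaf, _ => ∅
  | .node _ _ L R, f =>
      fitchOp (fitchSet4 L (f.take L.nLeaves)) (fitchSet4 R (f.drop L.nLeaves))

/-- `rootProb4 t a R = P(MP(f,T) = R ∣ root state = a)`. -/
noncomputable def rootProb4 (t : PhyloTree) (a : Fin 4) (R : Finset (Fin 4)) : ℝ :=
  ∑ f : Fin t.nLeaves → Fin 4,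
    if fitchSet4 t (List.ofFn f) = R then charProb4 t a (List.ofFn f) else 0

/-- The reconstruction accuracy
`RA(X) = ∑_{R ⊆ A, α ∈ R} (1/|R|) · P(MP(f,T) = R ∣ ρ = α)`, with `α := 0`. -/
noncomputable def RA4 (t : PhyloTree) : ℝ :=
  ∑ R : Finset (Fin 4),
    if (0 : Fin 4) ∈ R then (R.card : ℝ)⁻¹ * rootProb4 t 0 R else 0

/-- `ultra4 t p`: the tree `t` is ultrametric, and the probability of one
specific state change from the root to any leaf is `p` (under `N₄`, the
one-specific-change probabilities compose along a path as
`p₁ ∘ q₁ = p₁ + q₁ - 4·p₁·q₁`). -/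
def ultra4 : PhyloTree → ℝ → Prop
  | .leaf, p => p = 0
  | .node p₁ p₂ L R, p => ∃ q₁ q₂, ultra4 L q₁ ∧ ultra4 R q₂ ∧
      p = p₁ + q₁ - 4*p₁*q₁ ∧ p = p₂ + q₂ - 4*p₂*q₂

/-- `PParen4 t pᵢ A = P_{(A)}(Yᵢ)`: the probability, conditional on the node
`ρ` above the root `yᵢ` of `t` being in state `α = 0`, that the Fitch
algorithm assigns the set `A` at `yᵢ`, where the edge from `ρ` to `yᵢ`
carries one-specific-change probability `pᵢ`. -/
noncomputable def PParen4 (t : PhyloTree) (pi : ℝ) (A : Finset (Fin 4)) : ℝ :=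
  ∑ b : Fin 4, trans4 pi 0 b * rootProb4 t b A


section Helpers

lemma trans4_sum (q : ℝ) (a : Fin 4) : ∑ b : Fin 4, trans4 q a b = 1 := by
  fin_cases a <;> simp [trans4, Fin.sum_univ_four] <;> ring

lemma trans4_perm (σ : Equiv.Perm (Fin 4)) (q : ℝ) (a b : Fin 4) :
    trans4 q (σ a) (σ b) = trans4 q a b := by
  simp [trans4, σ.injective.eq_iff]

lemma charProb4_map (σ : Equiv.Perm (Fin 4)) :
    ∀ (t : PhyloTree) (a : Fin 4) (f : List (Fin 4)),
      charProb4 t (σ a) (f.map σ) = charProb4 t a f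
  | .leaf, a, f => by
      simp only [charProb4]
      have : f.map σ = [σ a] ↔ f = [a] := by
        constructor
        · intro h
          have := congrArg (List.map σ.symm) h
          simpa using this
        · intro h; simp [h]
      simp [this]
  | .node p₁ p₂ L R, a, f => by
      simp only [charProb4]
      rw [show (∑ b : Fin 4, ∑ c : Fin 4, trans4 p₁ (σ a) b * trans4 p₂ (σ a) c *
            charProb4 L b ((f.map σ).take L.nLeaves) * charProb4 R c ((f.map σ).drop L.nLeaves))
          = ∑ b : Fin 4, ∑ c : Fin 4, trans4 p₁ (σ a) (σ b) * trans4 p₂ (σ a) (σ c) *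
            charProb4 L (σ b) ((f.map σ).take L.nLeaves) * charProb4 R (σ c) ((f.map σ).drop L.nLeaves) from by
        rw [← Equiv.sum_comp σ (fun b => ∑ c : Fin 4, trans4 p₁ (σ a) b * trans4 p₂ (σ a) c *
          charProb4 L b ((f.map σ).take L.nLeaves) * charProb4 R c ((f.map σ).drop L.nLeaves))]
        exact Finset.sum_congr rfl fun b _ => (Equiv.sum_comp σ _).symm]
      refine Finset.sum_congr rfl fun b _ => Finset.sum_congr rfl fun c _ => ?_
      rw [trans4_perm, trans4_perm, ← List.map_take, ← List.map_drop,
        charProb4_map σ L b, charProb4_map σ R c]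

lemma fitchSet4_map (σ : Equiv.Perm (Fin 4)) :
    ∀ (t : PhyloTree) (f : List (Fin 4)),
      fitchSet4 t (f.map σ) = (fitchSet4 t f).image σ
  | .leaf, [] => by simp [fitchSet4]
  | .leaf, [b] => by simp [fitchSet4]
  | .leaf, (a :: b :: l) => by simp [fitchSet4]
  | .node p₁ p₂ L R, f => by
      simp only [fitchSet4]
      rw [← List.map_take, ← List.map_drop, fitchSet4_map σ L, fitchSet4_map σ R]
      set A := fitchSet4 L (f.take L.nLeaves)
      set B := fitchSet4 R (f.drop L.nLeaves)
      have hiff : (A.image σ ∩ B.image σ).Nonempty ↔ (A ∩ B).Nonempty := by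
        rw [← Finset.image_inter _ _ σ.injective, Finset.image_nonempty]
      unfold fitchOp
      by_cases h : (A ∩ B).Nonempty
      · rw [if_pos h, if_pos (hiff.mpr h), Finset.image_inter _ _ σ.injective]
      · rw [if_neg h, if_neg (fun hc => h (hiff.mp hc)), Finset.image_union]

lemma fitchSet4_nonempty : ∀ (t : PhyloTree) (f : List (Fin 4)),
    f.length = t.nLeaves → (fitchSet4 t f).Nonempty
  | .leaf, f, h => by
      match f, h with
      | [b], _ => simp [fitchSet4]
  | .node p₁ p₂ L R, f, h => by
      simp only [fitchSet4]
      have hL : (f.take L.nLeaves).length = L.nLeaves := by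
        simp [List.length_take, h, PhyloTree.nLeaves]
      have hR : (f.drop L.nLeaves).length = R.nLeaves := by
        simp [List.length_drop, h, PhyloTree.nLeaves]
      have h1 := fitchSet4_nonempty L _ hL
      have h2 := fitchSet4_nonempty R _ hR
      unfold fitchOp
      split
      · assumption
      · exact h1.mono Finset.subset_union_left

def splitEquiv (m n : ℕ) : ((Fin m → Fin 4) × (Fin n → Fin 4)) ≃ (Fin (m + n) → Fin 4) :=
  (Equiv.sumArrowEquivProdArrow _ _ _).symm.trans
    (Equiv.arrowCongr finSumFinEquiv (Equiv.refl _))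

lemma splitEquiv_ofFn {m n : ℕ} (g : (Fin m → Fin 4) × (Fin n → Fin 4)) :
    List.ofFn (splitEquiv m n g) = List.ofFn g.1 ++ List.ofFn g.2 := by
  rw [List.ofFn_add]
  congr 1
  · congr 1; funext i
    simp [splitEquiv, Equiv.sumArrowEquivProdArrow, Equiv.arrowCongr]
    exact congrArg (Sum.elim g.1 g.2) (finSumFinEquiv_symm_apply_castAdd i)
  · congr 1; funext i
    simp [splitEquiv, Equiv.sumArrowEquivProdArrow, Equiv.arrowCongr]

lemma charProb4_sum : ∀ (t : PhyloTree) (a : Fin 4),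
    ∑ f : Fin t.nLeaves → Fin 4, charProb4 t a (List.ofFn f) = 1
  | .leaf, a => by
      show ∑ f : Fin 1 → Fin 4, charProb4 .leaf a (List.ofFn f) = 1
      rw [← Equiv.sum_comp (Equiv.funUnique (Fin 1) (Fin 4)).symm
        (fun f => charProb4 .leaf a (List.ofFn f))]
      simp [charProb4, Equiv.funUnique, List.ofFn_succ, Finset.sum_ite_eq']
  | .node p₁ p₂ L R, a => by
      set e := splitEquiv L.nLeaves R.nLeaves with he_def
      have he : ∀ g : (Fin L.nLeaves → Fin 4) × (Fin R.nLeaves → Fin 4),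
          List.ofFn (e g) = List.ofFn g.1 ++ List.ofFn g.2 := fun g => splitEquiv_ofFn g
      show ∑ f : Fin (L.nLeaves + R.nLeaves) → Fin 4,
          charProb4 (.node p₁ p₂ L R) a (List.ofFn f) = 1
      rw [← Equiv.sum_comp e (fun f => charProb4 (.node p₁ p₂ L R) a (List.ofFn f))]
      have step : ∀ g : (Fin L.nLeaves → Fin 4) × (Fin R.nLeaves → Fin 4),
          charProb4 (.node p₁ p₂ L R) a (List.ofFn (e g))
          = ∑ b : Fin 4, ∑ c : Fin 4, trans4 p₁ a b * trans4 p₂ a c *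
              charProb4 L b (List.ofFn g.1) * charProb4 R c (List.ofFn g.2) := by
        intro g
        rw [he g]
        simp only [charProb4]
        rw [List.take_left' List.length_ofFn, List.drop_left' List.length_ofFn]
      rw [Finset.sum_congr rfl fun g _ => step g]
      rw [Fintype.sum_prod_type]
      have : ∀ g1 : Fin L.nLeaves → Fin 4,
          (∑ g2 : Fin R.nLeaves → Fin 4, ∑ b : Fin 4, ∑ c : Fin 4,
            trans4 p₁ a b * trans4 p₂ a c * charProb4 L b (List.ofFn g1) * charProb4 R c (List.ofFn g2))
          = ∑ b : Fin 4, trans4 p₁ a b * charProb4 L b (List.ofFn g1) := by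
        intro g1
        rw [Finset.sum_comm]
        refine Finset.sum_congr rfl fun b _ => ?_
        rw [show (∑ g2 : Fin R.nLeaves → Fin 4, ∑ c : Fin 4,
            trans4 p₁ a b * trans4 p₂ a c * charProb4 L b (List.ofFn g1) * charProb4 R c (List.ofFn g2))
          = ∑ c : Fin 4, trans4 p₁ a b * trans4 p₂ a c * charProb4 L b (List.ofFn g1) *
              (∑ g2 : Fin R.nLeaves → Fin 4, charProb4 R c (List.ofFn g2)) from by
          rw [Finset.sum_comm]
          exact Finset.sum_congr rfl fun c _ => by rw [Finset.mul_sum]]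
        simp only [charProb4_sum R, mul_one]
        rw [← Finset.sum_mul, ← Finset.mul_sum, trans4_sum, mul_one]
      rw [Finset.sum_congr rfl fun g1 _ => this g1]
      rw [Finset.sum_comm]
      have : ∀ b : Fin 4, (∑ g1 : Fin L.nLeaves → Fin 4, trans4 p₁ a b * charProb4 L b (List.ofFn g1))
          = trans4 p₁ a b := by
        intro b
        rw [← Finset.mul_sum, charProb4_sum L, mul_one]
      rw [Finset.sum_congr rfl fun b _ => this b, trans4_sum]

lemma rootProb4_perm (σ : Equiv.Perm (Fin 4)) (t : PhyloTree) (a : Fin 4) (R : Finset (Fin 4)) :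
    rootProb4 t (σ a) (R.image σ) = rootProb4 t a R := by
  unfold rootProb4
  rw [← Equiv.sum_comp ((Equiv.refl (Fin t.nLeaves)).arrowCongr σ)
    (fun f => if fitchSet4 t (List.ofFn f) = R.image σ then charProb4 t (σ a) (List.ofFn f) else 0)]
  refine Finset.sum_congr rfl fun f _ => ?_
  have h1 : List.ofFn ((Equiv.refl (Fin t.nLeaves)).arrowCongr σ f) = (List.ofFn f).map σ := by
    rw [List.map_ofFn]; rfl
  rw [h1, fitchSet4_map σ t, charProb4_map σ t a]
  refine if_congr ?_ rfl rfl
  exact ⟨fun h => Finset.image_injective σ.injective h, fun h => by rw [h]⟩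

lemma rootProb4_total (t : PhyloTree) (a : Fin 4) :
    ∑ R : Finset (Fin 4), rootProb4 t a R = 1 := by
  unfold rootProb4
  rw [Finset.sum_comm]
  rw [Finset.sum_congr rfl fun f _ => Finset.sum_ite_eq Finset.univ (fitchSet4 t (List.ofFn f))
    (fun _ => charProb4 t a (List.ofFn f))]
  simp only [Finset.mem_univ, if_true]
  exact charProb4_sum t a

lemma rootProb4_empty (t : PhyloTree) (a : Fin 4) : rootProb4 t a ∅ = 0 := by
  unfold rootProb4
  refine Finset.sum_eq_zero fun f _ => ?_
  rw [if_neg]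
  exact (fitchSet4_nonempty t _ (List.length_ofFn (f := f))).ne_empty

lemma sum_finset_fin4 (g : Finset (Fin 4) → ℝ) :
    ∑ R : Finset (Fin 4), g R =
      g ∅ + g {0} + g {1} + g {2} + g {3} + g {0,1} + g {0,2} + g {0,3}
      + g {1,2} + g {1,3} + g {2,3} + g {0,1,2} + g {0,1,3} + g {0,2,3}
      + g {1,2,3} + g {0,1,2,3} := by
  rw [show (Finset.univ : Finset (Finset (Fin 4))) =
    {∅, {0}, {1}, {2}, {3}, {0,1}, {0,2}, {0,3}, {1,2}, {1,3}, {2,3},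
     {0,1,2}, {0,1,3}, {0,2,3}, {1,2,3}, {0,1,2,3}} from by decide]
  repeat rw [Finset.sum_insert (by decide)]
  rw [Finset.sum_singleton]
  ring

end Helpers

/-- With `Tᵢ` a rooted binary tree on leaf set `Yᵢ` whose
root `yᵢ` is attached below a node `ρ` by an edge with one-specific-change
probability `pᵢ ∈ [0,1/4]`,
`4·P_(α)(Yᵢ) + 6·P_(αβ)(Yᵢ) + 4·P_(αβγ)(Yᵢ) + P_(αβγδ)(Yᵢ)
  = 4·(pᵢ + (1 - 4pᵢ)·RA(Yᵢ))`. -/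
theorem PParen4_RA_identity (t : PhyloTree) (pi : ℝ) (h₀ : 0 ≤ pi)
    (h₁ : pi ≤ 1/4) (hv : t.valid) :
    4 * PParen4 t pi {0} + 6 * PParen4 t pi {0, 1}
      + 4 * PParen4 t pi {0, 1, 2} + PParen4 t pi {0, 1, 2, 3}
      = 4 * (pi + (1 - 4*pi) * RA4 t) := by
  classical
  have key2 : ∀ (σ : Equiv.Perm (Fin 4)) (S A : Finset (Fin 4)) (b : Fin 4),
      σ 0 = b → S.image σ = A → rootProb4 t b A = rootProb4 t 0 S := by
    rintro σ S A b rfl rfl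
    exact rootProb4_perm σ t 0 S
  have hA1b1 : rootProb4 t 1 {0} = rootProb4 t 0 {1} :=
    key2 (Equiv.swap 0 1) {1} {0} 1 (by decide) (by decide)
  have hA1b2 : rootProb4 t 2 {0} = rootProb4 t 0 {1} :=
    key2 ((Equiv.swap 0 1).trans (Equiv.swap 1 2)) {1} {0} 2 (by decide) (by decide)
  have hA1b3 : rootProb4 t 3 {0} = rootProb4 t 0 {1} :=
    key2 ((Equiv.swap 0 1).trans (Equiv.swap 1 3)) {1} {0} 3 (by decide) (by decide)
  have hA2b1 : rootProb4 t 1 {0,1} = rootProb4 t 0 {0,1} :=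
    key2 (Equiv.swap 0 1) {0,1} {0,1} 1 (by decide) (by decide)
  have hA2b2 : rootProb4 t 2 {0,1} = rootProb4 t 0 {1,2} :=
    key2 (Equiv.swap 0 2) {1,2} {0,1} 2 (by decide) (by decide)
  have hA2b3 : rootProb4 t 3 {0,1} = rootProb4 t 0 {1,2} :=
    key2 (((Equiv.swap 0 1).trans (Equiv.swap 1 2)).trans (Equiv.swap 2 3)) {1,2} {0,1} 3
      (by decide) (by decide)
  have hA3b1 : rootProb4 t 1 {0,1,2} = rootProb4 t 0 {0,1,2} :=
    key2 (Equiv.swap 0 1) {0,1,2} {0,1,2} 1 (by decide) (by decide)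
  have hA3b2 : rootProb4 t 2 {0,1,2} = rootProb4 t 0 {0,1,2} :=
    key2 (Equiv.swap 0 2) {0,1,2} {0,1,2} 2 (by decide) (by decide)
  have hA3b3 : rootProb4 t 3 {0,1,2} = rootProb4 t 0 {1,2,3} :=
    key2 (Equiv.swap 0 3) {1,2,3} {0,1,2} 3 (by decide) (by decide)
  have hA4b1 : rootProb4 t 1 {0,1,2,3} = rootProb4 t 0 {0,1,2,3} :=
    key2 (Equiv.swap 0 1) {0,1,2,3} {0,1,2,3} 1 (by decide) (by decide)
  have hA4b2 : rootProb4 t 2 {0,1,2,3} = rootProb4 t 0 {0,1,2,3} :=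
    key2 (Equiv.swap 0 2) {0,1,2,3} {0,1,2,3} 2 (by decide) (by decide)
  have hA4b3 : rootProb4 t 3 {0,1,2,3} = rootProb4 t 0 {0,1,2,3} :=
    key2 (Equiv.swap 0 3) {0,1,2,3} {0,1,2,3} 3 (by decide) (by decide)
  have hs2 : rootProb4 t 0 {2} = rootProb4 t 0 {1} :=
    key2 (Equiv.swap 1 2) {1} {2} 0 (by decide) (by decide)
  have hs3 : rootProb4 t 0 {3} = rootProb4 t 0 {1} :=
    key2 (Equiv.swap 1 3) {1} {3} 0 (by decide) (by decide)
  have hd2 : rootProb4 t 0 {0,2} = rootProb4 t 0 {0,1} :=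
    key2 (Equiv.swap 1 2) {0,1} {0,2} 0 (by decide) (by decide)
  have hd3 : rootProb4 t 0 {0,3} = rootProb4 t 0 {0,1} :=
    key2 (Equiv.swap 1 3) {0,1} {0,3} 0 (by decide) (by decide)
  have he13 : rootProb4 t 0 {1,3} = rootProb4 t 0 {1,2} :=
    key2 (Equiv.swap 2 3) {1,2} {1,3} 0 (by decide) (by decide)
  have he23 : rootProb4 t 0 {2,3} = rootProb4 t 0 {1,2} :=
    key2 ((Equiv.swap 1 2).trans (Equiv.swap 1 3)) {1,2} {2,3} 0 (by decide) (by decide)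
  have hc013 : rootProb4 t 0 {0,1,3} = rootProb4 t 0 {0,1,2} :=
    key2 (Equiv.swap 2 3) {0,1,2} {0,1,3} 0 (by decide) (by decide)
  have hc023 : rootProb4 t 0 {0,2,3} = rootProb4 t 0 {0,1,2} :=
    key2 ((Equiv.swap 1 2).trans (Equiv.swap 1 3)) {0,1,2} {0,2,3} 0 (by decide) (by decide)
  have hemp : rootProb4 t 0 ∅ = 0 := rootProb4_empty t 0
  have hnorm := rootProb4_total t 0
  rw [sum_finset_fin4 (fun R => rootProb4 t 0 R)] at hnorm
  rw [hemp, hs2, hs3, hd2, hd3, he13, he23, hc013, hc023] at hnorm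
  have t0 : trans4 pi 0 0 = 1 - 3*pi := if_pos rfl
  have t1 : trans4 pi 0 1 = pi := if_neg (by decide)
  have t2 : trans4 pi 0 2 = pi := if_neg (by decide)
  have t3 : trans4 pi 0 3 = pi := if_neg (by decide)
  have hRA : RA4 t = rootProb4 t 0 {0}
      + (2:ℝ)⁻¹ * rootProb4 t 0 {0,1} + (2:ℝ)⁻¹ * rootProb4 t 0 {0,1}
      + (2:ℝ)⁻¹ * rootProb4 t 0 {0,1}
      + (3:ℝ)⁻¹ * rootProb4 t 0 {0,1,2} + (3:ℝ)⁻¹ * rootProb4 t 0 {0,1,2}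
      + (3:ℝ)⁻¹ * rootProb4 t 0 {0,1,2}
      + (4:ℝ)⁻¹ * rootProb4 t 0 {0,1,2,3} := by
    rw [RA4, sum_finset_fin4]
    rw [if_neg (by decide), if_pos (by decide), if_neg (by decide), if_neg (by decide),
      if_neg (by decide), if_pos (by decide), if_pos (by decide), if_pos (by decide),
      if_neg (by decide), if_neg (by decide), if_neg (by decide), if_pos (by decide),
      if_pos (by decide), if_pos (by decide), if_neg (by decide), if_pos (by decide)]
    rw [hd2, hd3, hc013, hc023]
    norm_num [show ({0}:Finset (Fin 4)).card = 1 from by decide,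
      show ({0,1}:Finset (Fin 4)).card = 2 from by decide,
      show ({0,2}:Finset (Fin 4)).card = 2 from by decide,
      show ({0,3}:Finset (Fin 4)).card = 2 from by decide,
      show ({0,1,2}:Finset (Fin 4)).card = 3 from by decide,
      show ({0,1,3}:Finset (Fin 4)).card = 3 from by decide,
      show ({0,2,3}:Finset (Fin 4)).card = 3 from by decide,
      show ({0,1,2,3}:Finset (Fin 4)).card = 4 from by decide]
  simp only [PParen4, Fin.sum_univ_four] 
  rw [t0, t1, t2, t3, hA1b1, hA1b2, hA1b3, hA2b1, hA2b2, hA2b3, hA3b1, hA3b2, hA3b3,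
    hA4b1, hA4b2, hA4b3, hRA]
  linear_combination (4*pi) * hnorm
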